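/- With φ_{h,d} as above, for h = 1 one has the closed formula φ_{1,d}(s) = (d² - 1 - 6s(d-s))/12 for every integer s with 0 ≤ s ≤ d-1; in particular φ_{1,d}(0) = (d²-1)/12. -/

import Mathlib

/-- `e(x) = exp(2πi x)`. -/
noncomputable def ee (x : ℝ) : ℂ := Complex.exp (2 * Real.pi * Complex.I * x)

/-- The generalized Dedekind sum
`φ_{h,d}(s) = ∑_{k=1}^{d-1} e(ks/d) / ((1 - e(kh/d)) (1 - e(-k/d)))`. -/
noncomputable def phi (h : ℤ) (d : ℕ) (s : ℤ) : ℂ :=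
  ∑ k ∈ Finset.Ico 1 d,
    ee ((k : ℝ) * (s : ℝ) / d) /
      ((1 - ee ((k : ℝ) * (h : ℝ) / d)) * (1 - ee (-(k : ℝ) / d)))

open Finset Complex

lemma ee_nat_div (n d : ℕ) (hd : d ≠ 0) :
    ee ((n : ℝ) / d) = Complex.exp (2 * Real.pi * Complex.I / d) ^ n := by
  rw [ee, ← Complex.exp_nat_mul]
  congr 1
  have : (d:ℂ) ≠ 0 := Nat.cast_ne_zero.mpr hd
  push_cast
  field_simp

lemma ee_neg (x : ℝ) : ee (-x) = (ee x)⁻¹ := by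
  rw [ee, ee, ← Complex.exp_neg]
  congr 1
  push_cast
  ring

lemma sum_geom_zero (d : ℕ) (z : ℂ) (hz : z ≠ 1) (hzd : z ^ d = 1) :
    ∑ j ∈ range d, z ^ j = 0 := by
  rw [geom_sum_eq hz, hzd, sub_self, zero_div]

lemma key_poly (d : ℕ) (z : ℂ) :
    (1 - z) * ∑ j ∈ range d, (j : ℂ) * z ^ j
      = (∑ j ∈ range d, z ^ j) - 1 - ((d : ℂ) - 1) * z ^ d := by
  induction d with
  | zero => simp
  | succ n ih =>
    rw [Finset.sum_range_succ, Finset.sum_range_succ, mul_add, ih]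
    push_cast
    ring

lemma key (d : ℕ) (z : ℂ) (hz : z ≠ 1) (hzd : z ^ d = 1) :
    ∑ j ∈ range d, (j : ℂ) * z ^ j = -d / (1 - z) := by
  have h1 : (1 : ℂ) - z ≠ 0 := sub_ne_zero.mpr (Ne.symm hz)
  field_simp
  rw [mul_comm, key_poly, sum_geom_zero d z hz hzd, hzd]
  ring

lemma c1 (n : ℕ) : ∑ i ∈ range n, (i : ℂ) = n * (n - 1) / 2 := by
  induction n with
  | zero => simp
  | succ m ih => rw [Finset.sum_range_succ, ih]; push_cast; ring

lemma c2 (n : ℕ) : ∑ i ∈ range n, (i : ℂ) ^ 2 = n * (n - 1) * (2 * n - 1) / 6 := by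
  induction n with
  | zero => simp
  | succ m ih => rw [Finset.sum_range_succ, ih]; push_cast; ring

lemma aux_term (z w : ℂ) (hz : z ≠ 0) (h1 : 1 - z ≠ 0) (hw : w ≠ 0) (n : ℕ) :
    z^n / ((1 - z) * (1 - z⁻¹)) = -(z^(n+1)) * (-w/(1-z))^2 / w^2 := by
  have hden : ((1-z)^2 * z⁻¹ * -1 : ℂ) ≠ 0 := by
    simp only [mul_ne_zero_iff]
    exact ⟨⟨pow_ne_zero _ h1, inv_ne_zero hz⟩, by norm_num⟩
  rw [show (1 - z) * (1 - z⁻¹) = ((1:ℂ)-z)^2 * z⁻¹ * -1 by field_simp; ring]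
  rw [div_eq_div_iff hden (pow_ne_zero 2 hw)]
  field_simp
  ring

lemma main (d : ℕ) (hd : 1 ≤ d) (s : ℤ) (hs0 : 0 ≤ s) (hsd : s < (d:ℤ)) :
    phi 1 d s = ((d : ℂ)^2 - 1 - 6*(s:ℂ)*((d:ℂ)-(s:ℂ)))/12 := by
  have hd0 : d ≠ 0 := by omega
  have hdC : (d:ℂ) ≠ 0 := Nat.cast_ne_zero.mpr hd0
  obtain ⟨s', rfl⟩ : ∃ s' : ℕ, s = (s' : ℤ) := ⟨s.toNat, (Int.toNat_of_nonneg hs0).symm⟩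
  have hs'd : s' < d := by exact_mod_cast hsd
  set ζ : ℂ := Complex.exp (2 * Real.pi * Complex.I / d) with hζ
  have hprim : IsPrimitiveRoot ζ d := Complex.isPrimitiveRoot_exp d hd0
  have hζd : ζ ^ d = 1 := hprim.pow_eq_one
  have hdvd : ∀ m : ℕ, ζ ^ m = 1 ↔ d ∣ m := fun m => hprim.pow_eq_one_iff_dvd m
  -- Step 1
  have step1 : phi 1 d (s' : ℤ) =
      ∑ k ∈ Finset.Ico 1 d,
        -((ζ^k)^(s'+1)) * (-(d:ℂ)/(1-ζ^k))^2 / (d:ℂ)^2 := by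
    rw [phi]
    refine Finset.sum_congr rfl ?_
    intro k hk
    rw [Finset.mem_Ico] at hk
    have hk1 : ζ ^ k ≠ 1 := by
      intro h
      have := Nat.le_of_dvd (by omega) ((hdvd k).mp h)
      omega
    have e1 : ee ((k:ℝ) * (((s':ℤ)):ℝ) / d) = (ζ^k)^s' := by
      have h : ((k:ℝ) * (((s':ℤ)):ℝ) / d) = ((k*s' : ℕ):ℝ)/d := by push_cast; ring
      rw [h, ee_nat_div _ _ hd0, ← hζ, pow_mul]
    have e2 : ee ((k:ℝ) * (((1:ℤ)):ℝ) / d) = ζ^k := by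
      have h : ((k:ℝ) * (((1:ℤ)):ℝ) / d) = ((k : ℕ):ℝ)/d := by push_cast; ring
      rw [h, ee_nat_div _ _ hd0, ← hζ]
    have e3 : ee (-(k:ℝ) / d) = (ζ^k)⁻¹ := by
      have h : (-(k:ℝ)/d) = -(((k:ℕ):ℝ)/d) := by ring
      rw [h, ee_neg, ee_nat_div _ _ hd0, ← hζ]
    rw [e1, e2, e3]
    exact aux_term (ζ^k) (d:ℂ) (pow_ne_zero _ (Complex.exp_ne_zero _))
      (sub_ne_zero.mpr (Ne.symm hk1)) hdC s'
  -- Step 1b : replace -(d)/(1-ζ^k) by the weighted geometric sum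
  have step1b : ∑ k ∈ Finset.Ico 1 d,
        -((ζ^k)^(s'+1)) * (-(d:ℂ)/(1-ζ^k))^2 / (d:ℂ)^2
      = ∑ k ∈ Finset.Ico 1 d,
        -((ζ^k)^(s'+1)) * (∑ j ∈ range d, (j:ℂ) * (ζ^k)^j)^2 / (d:ℂ)^2 := by
    refine Finset.sum_congr rfl fun k hk => ?_
    rw [Finset.mem_Ico] at hk
    have hk1 : ζ ^ k ≠ 1 := by
      intro h
      have := Nat.le_of_dvd (by omega) ((hdvd k).mp h)
      omega
    have hkd : (ζ ^ k) ^ d = 1 := by rw [← pow_mul, mul_comm, pow_mul, hζd, one_pow]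
    rw [key d (ζ^k) hk1 hkd]
  -- Step 2 : expand the square and swap sums
  have step2 : ∑ k ∈ Finset.Ico 1 d,
        -((ζ^k)^(s'+1)) * (∑ j ∈ range d, (j:ℂ) * (ζ^k)^j)^2 / (d:ℂ)^2
      = ∑ i ∈ range d, ∑ j ∈ range d,
          (i:ℂ) * (j:ℂ) * (∑ k ∈ Finset.Ico 1 d, ζ^(k*(s'+1+i+j))) * (-(1:ℂ)/(d:ℂ)^2) := by
    have h1 : ∀ k ∈ Finset.Ico 1 d,
        -((ζ^k)^(s'+1)) * (∑ j ∈ range d, (j:ℂ) * (ζ^k)^j)^2 / (d:ℂ)^2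
        = ∑ i ∈ range d, ∑ j ∈ range d,
            (i:ℂ) * (j:ℂ) * ζ^(k*(s'+1+i+j)) * (-(1:ℂ)/(d:ℂ)^2) := by
      intro k _
      rw [sq, Finset.sum_mul_sum]
      simp only [Finset.mul_sum, Finset.sum_div]
      refine Finset.sum_congr rfl fun i _ => Finset.sum_congr rfl fun j _ => ?_
      have hexp : (ζ^k)^(s'+1) * ((ζ^k)^i * (ζ^k)^j) = ζ^(k*(s'+1+i+j)) := by
        rw [← pow_add, ← pow_add, ← pow_mul,
          show k*(s'+1+(i+j)) = k*(s'+1+i+j) by ring]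
      linear_combination (-(i:ℂ)*(j:ℂ)/(d:ℂ)^2) * hexp
    rw [Finset.sum_congr rfl h1, Finset.sum_comm]
    refine Finset.sum_congr rfl fun i _ => ?_
    rw [Finset.sum_comm]
    refine Finset.sum_congr rfl fun j _ => ?_
    rw [← Finset.sum_mul, ← Finset.mul_sum]
  -- inner k-sum evaluation
  have hrange : Finset.range d = insert 0 (Finset.Ico 1 d) := by
    ext a; simp only [Finset.mem_range, Finset.mem_insert, Finset.mem_Ico]; omega
  have hS : ∀ m : ℕ, ∑ k ∈ Finset.Ico 1 d, ζ^(k*m) = (if d ∣ m then (d:ℂ) else 0) - 1 := by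
    intro m
    have h0 : (0:ℕ) ∉ Finset.Ico 1 d := by simp
    have hins : ∑ k ∈ Finset.range d, ζ^(k*m) = 1 + ∑ k ∈ Finset.Ico 1 d, ζ^(k*m) := by
      rw [hrange, Finset.sum_insert h0]; simp
    have hfull : ∑ k ∈ Finset.range d, ζ^(k*m) = (if d ∣ m then (d:ℂ) else 0) := by
      have hpm : ∀ k, ζ^(k*m) = (ζ^m)^k := fun k => by rw [← pow_mul, mul_comm]
      simp only [hpm]
      by_cases hdm : d ∣ m
      · simp [(hdvd m).mpr hdm, hdm]
      · rw [if_neg hdm]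
        exact sum_geom_zero d (ζ^m) (fun h => hdm ((hdvd m).mp h))
          (by rw [← pow_mul, mul_comm, pow_mul, hζd, one_pow])
    rw [← hfull, hins]; ring
  set r : ℕ := d - 1 - s' with hr
  have hjf : ∀ i, i < d → (if i ≤ r then r - i else r + d - i) < d := by
    intro i hi; split_ifs <;> omega
  have hdiv : ∀ i b, i < d → b < d →
      (d ∣ (s' + 1 + i + b) ↔ b = (if i ≤ r then r - i else r + d - i)) := by
    intro i b hi hb
    constructor
    · rintro ⟨c, hc⟩
      have h1 : d * c < d * 3 := by rw [← hc]; omega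
      have hc3 : c < 3 := Nat.lt_of_mul_lt_mul_left h1
      have hc0 : c ≠ 0 := by rintro rfl; omega
      interval_cases c <;> (split_ifs <;> omega)
    · rintro rfl
      split_ifs with h
      · exact ⟨1, by omega⟩
      · exact ⟨2, by omega⟩
  -- Step 4 : evaluate the inner j-sum
  have step4 : ∀ i ∈ range d,
      ∑ j ∈ range d, (i:ℂ)*(j:ℂ)*((if d ∣ (s'+1+i+j) then (d:ℂ) else 0) - 1)*(-(1:ℂ)/(d:ℂ)^2)
      = ((i:ℂ) * (((if i ≤ r then r - i else r + d - i : ℕ)):ℂ) * (d:ℂ)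
          - (i:ℂ) * ((d:ℂ)*((d:ℂ)-1)/2)) * (-(1:ℂ)/(d:ℂ)^2) := by
    intro i hi
    rw [Finset.mem_range] at hi
    have hsplit : ∀ j : ℕ, (i:ℂ)*(j:ℂ)*((if d ∣ (s'+1+i+j) then (d:ℂ) else 0) - 1)*(-(1:ℂ)/(d:ℂ)^2)
        = (if d ∣ (s'+1+i+j) then (i:ℂ)*(j:ℂ)*(d:ℂ)*(-(1:ℂ)/(d:ℂ)^2) else 0)
          - (j:ℂ) * ((i:ℂ)*(-(1:ℂ)/(d:ℂ)^2)) := by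
      intro j; split_ifs <;> ring
    simp only [hsplit]
    rw [Finset.sum_sub_distrib]
    have hone : ∑ j ∈ range d, (if d ∣ (s'+1+i+j) then (i:ℂ)*(j:ℂ)*(d:ℂ)*(-(1:ℂ)/(d:ℂ)^2) else 0)
        = (i:ℂ)*(((if i ≤ r then r - i else r + d - i : ℕ)):ℂ)*(d:ℂ)*(-(1:ℂ)/(d:ℂ)^2) := by
      rw [Finset.sum_eq_single_of_mem (if i ≤ r then r - i else r + d - i)
        (Finset.mem_range.mpr (hjf i hi))]
      · rw [if_pos ((hdiv i _ hi (hjf i hi)).mpr rfl)]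
      · intro b hb hbne
        rw [if_neg]
        intro hdvd'
        exact hbne ((hdiv i b hi (Finset.mem_range.mp hb)).mp hdvd')
    rw [hone, ← Finset.sum_mul, c1]
    ring
  -- T computation
  have hr1d : r + 1 ≤ d := by omega
  have hT : ∑ i ∈ range d, (i:ℂ) * (((if i ≤ r then r - i else r + d - i : ℕ)):ℂ)
      = (((r:ℂ))*(((r:ℂ)+1)*(r:ℂ)/2) - ((r:ℂ)+1)*(r:ℂ)*(2*(r:ℂ)+1)/6)
        + (((r:ℂ)+(d:ℂ)) * ((d:ℂ)*((d:ℂ)-1)/2 - ((r:ℂ)+1)*(r:ℂ)/2)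
           - ((d:ℂ)*((d:ℂ)-1)*(2*(d:ℂ)-1)/6 - ((r:ℂ)+1)*(r:ℂ)*(2*(r:ℂ)+1)/6)) := by
    rw [Finset.range_eq_Ico, ← Finset.sum_Ico_consecutive _ (Nat.zero_le (r+1)) hr1d]
    have hA : ∑ i ∈ Finset.Ico 0 (r+1), (i:ℂ) * (((if i ≤ r then r - i else r + d - i : ℕ)):ℂ)
        = ∑ i ∈ range (r+1), ((r:ℂ)*(i:ℂ) - (i:ℂ)^2) := by
      rw [← Finset.range_eq_Ico]
      refine Finset.sum_congr rfl fun i hi => ?_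
      rw [Finset.mem_range] at hi
      rw [if_pos (by omega : i ≤ r), Nat.cast_sub (by omega : i ≤ r)]
      ring
    have hB : ∑ i ∈ Finset.Ico (r+1) d, (i:ℂ) * (((if i ≤ r then r - i else r + d - i : ℕ)):ℂ)
        = ∑ i ∈ Finset.Ico (r+1) d, (((r:ℂ)+(d:ℂ))*(i:ℂ) - (i:ℂ)^2) := by
      refine Finset.sum_congr rfl fun i hi => ?_
      rw [Finset.mem_Ico] at hi
      rw [if_neg (by omega), Nat.cast_sub (by omega : i ≤ r + d)]
      push_cast
      ring
    rw [hA, hB, Finset.sum_sub_distrib, Finset.sum_sub_distrib,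
      ← Finset.mul_sum, ← Finset.mul_sum, c1, c2,
      Finset.sum_Ico_eq_sub (fun i => (i:ℂ)) hr1d,
      Finset.sum_Ico_eq_sub (fun i => (i:ℂ)^2) hr1d, c1, c1, c2, c2]
    push_cast
    ring
  -- assemble everything
  have step3 : ∑ i ∈ range d, ∑ j ∈ range d,
        ((i:ℂ) * (j:ℂ) * ∑ k ∈ Finset.Ico 1 d, ζ^(k*(s'+1+i+j))) * (-(1:ℂ)/(d:ℂ)^2)
      = ∑ i ∈ range d, ∑ j ∈ range d,
        (i:ℂ)*(j:ℂ)*((if d ∣ (s'+1+i+j) then (d:ℂ) else 0) - 1)*(-(1:ℂ)/(d:ℂ)^2) := by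
    refine Finset.sum_congr rfl fun i _ => Finset.sum_congr rfl fun j _ => ?_
    rw [hS (s'+1+i+j)]
  have hrC : (r:ℂ) + (s':ℂ) + 1 = (d:ℂ) := by
    have h : r + s' + 1 = d := by omega
    exact_mod_cast congrArg (Nat.cast : ℕ → ℂ) h
  rw [step1, step1b, step2, step3, Finset.sum_congr rfl step4]
  calc ∑ i ∈ range d,
        ((i:ℂ) * ((if i ≤ r then r - i else r + d - i : ℕ):ℂ) * (d:ℂ)
          - (i:ℂ)*((d:ℂ)*((d:ℂ)-1)/2)) * (-(1:ℂ)/(d:ℂ)^2)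
      = ∑ i ∈ range d,
        ((i:ℂ) * ((if i ≤ r then r - i else r + d - i : ℕ):ℂ) * ((d:ℂ) * (-(1:ℂ)/(d:ℂ)^2))
          - (i:ℂ) * ((d:ℂ)*((d:ℂ)-1)/2 * (-(1:ℂ)/(d:ℂ)^2))) :=
        Finset.sum_congr rfl fun i _ => by ring
    _ = (∑ i ∈ range d, (i:ℂ) * ((if i ≤ r then r - i else r + d - i : ℕ):ℂ))
          * ((d:ℂ) * (-(1:ℂ)/(d:ℂ)^2))
        - (∑ i ∈ range d, (i:ℂ)) * ((d:ℂ)*((d:ℂ)-1)/2 * (-(1:ℂ)/(d:ℂ)^2)) := by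
        rw [Finset.sum_sub_distrib, ← Finset.sum_mul, ← Finset.sum_mul]
    _ = _ := by
        rw [hT, c1]
        have hsC : ((s':ℤ):ℂ) = (d:ℂ) - 1 - (r:ℂ) := by push_cast; linear_combination hrC
        rw [hsC]
        field_simp
        ring_nf

theorem phi_one_closed_form (d : ℕ) (hd : 1 ≤ d) (s : ℤ) (hs0 : 0 ≤ s) (hsd : s < d) :
    phi 1 d s = ((d : ℂ) ^ 2 - 1 - 6 * (s : ℂ) * ((d : ℂ) - (s : ℂ))) / 12 ∧
    phi 1 d 0 = ((d : ℂ) ^ 2 - 1) / 12 := by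
  constructor
  · exact main d hd s hs0 hsd
  · have h := main d hd 0 le_rfl (by exact_mod_cast hd)
    simpa using h
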